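/- Let X ⊆ 𝕊 and let φ ∈ B_♯^X(𝔻*). Suppose g is a Möbius transformation mapping 𝔻* bijectively onto itself such that φ(g(z)) g'(z)² = φ(z) for all z ∈ 𝔻*, and suppose there exists ξ ∈ 𝕊 with ξ ∉ X such that gⁿ(z) → ξ as n → ∞ for every z ∈ 𝔻*. Then φ is identically zero on 𝔻*. -/

import Mathlib

open MeasureTheory Filter Topology ENNReal

noncomputable section

/-- The open unit disk in the complex plane. -/
def unitDisk : Set ℂ := {z : ℂ | ‖z‖ < 1}

/-- The unit circle in the complex plane. -/
def unitCircle : Set ℂ := {z : ℂ | ‖z‖ = 1}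

/-- The essential supremum of `|μ|` over a subset `s` of the plane. -/
def essBnd (μ : ℂ → ℂ) (s : Set ℂ) : ℝ≥0∞ :=
  essSup (fun z => (‖μ z‖₊ : ℝ≥0∞)) (volume.restrict s)

/-- Membership in `L^∞(𝔻)`: essentially bounded measurable function on the unit disk. -/
def MemLinf (μ : ℂ → ℂ) : Prop :=
  AEStronglyMeasurable μ (volume.restrict unitDisk) ∧ essBnd μ unitDisk ≠ ⊤

/-- `μ` vanishes at the boundary relative to `X ⊆ 𝕊`: for every `ε > 0` there is a
compact `K ⊆ 𝔻 ∪ X` with `ess sup_{𝔻 \ K} |μ| < ε`. -/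
def VanishRel (X : Set ℂ) (μ : ℂ → ℂ) : Prop :=
  ∀ ε : ℝ, 0 < ε → ∃ K : Set ℂ, IsCompact K ∧ K ⊆ unitDisk ∪ X ∧
    essBnd μ (unitDisk \ K) < ENNReal.ofReal ε
/-- The exterior of the closed unit disk, `𝔻* = {z : |z| > 1}`. -/
def extDisk : Set ℂ := {z : ℂ | 1 < ‖z‖}

/-- The weight `(|z|² − 1)²` defining the norm of `B(𝔻*)`. -/
def bweight (z : ℂ) : ℝ := (‖z‖ ^ 2 - 1) ^ 2

/-- Membership in `B(𝔻*)`: holomorphic on `𝔻*` with finite norm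
`‖φ‖_B = sup (|z|²−1)² |φ(z)|`. -/
def MemB (φ : ℂ → ℂ) : Prop :=
  DifferentiableOn ℂ φ extDisk ∧
    ∃ M : ℝ, ∀ z ∈ extDisk, bweight z * ‖φ z‖ ≤ M

/-- `φ` vanishes at the boundary relative to `X ⊆ 𝕊`: for every `ε > 0` there is a
compact `K* ⊆ 𝔻* ∪ X` with `sup_{𝔻* \ K*} (|z|²−1)² |φ(z)| < ε`. -/
def BVanishRel (X : Set ℂ) (φ : ℂ → ℂ) : Prop :=
  ∀ ε : ℝ, 0 < ε → ∃ K : Set ℂ, IsCompact K ∧ K ⊆ extDisk ∪ X ∧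
    ∀ z ∈ extDisk \ K, bweight z * ‖φ z‖ < ε
/-- The Möbius transformation `z ↦ (az + b)/(cz + d)`. -/
def mobius (a b c d : ℂ) : ℂ → ℂ := fun z => (a * z + b) / (c * z + d)

lemma mobius_inj (a b c d : ℂ) (hdet : a * d - b * c ≠ 0) {z w : ℂ}
    (hz : c*z+d ≠ 0) (hw : c*w+d ≠ 0) (h : mobius a b c d z = mobius a b c d w) : z = w := by
  simp only [mobius] at h
  rw [div_eq_div_iff hz hw] at h
  have h2 : (a*d - b*c) * (z - w) = 0 := by linear_combination h
  rcases mul_eq_zero.1 h2 with h3 | h3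
  · exact absurd h3 hdet
  · exact sub_eq_zero.1 h3

lemma key_identity (a b c d : ℂ) (hdet : a * d - b * c ≠ 0)
    (hbij : Set.BijOn (mobius a b c d) (extDisk \ {z : ℂ | c * z + d = 0})
      (extDisk \ {a / c})) :
    ∀ z : ℂ, Complex.normSq (a*z+b) - Complex.normSq (c*z+d)
      = ‖a*d-b*c‖ * (Complex.normSq z - 1) := by
  set F : ℂ → ℝ := fun z => Complex.normSq (a*z+b) - Complex.normSq (c*z+d) with hF
  have hP : ∀ x y : ℂ, c*x+d = 0 → c*y+d = 0 → x = y := by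
    intro x y hx hy
    rcases eq_or_ne c 0 with hc | hc
    · exfalso; apply hdet
      subst hc
      simp only [zero_mul, zero_add] at hx
      rw [hx]; ring
    · have h : c * x = c * y := by linear_combination hx - hy
      exact mul_left_cancel₀ hc h
  have hFpos : ∀ z : ℂ, 1 < ‖z‖ → c*z+d ≠ 0 → 0 < F z := by
    intro z hz hcz
    have hmem : z ∈ extDisk \ {z : ℂ | c * z + d = 0} := ⟨hz, hcz⟩
    have himg := hbij.mapsTo hmem
    have h1 : 1 < ‖mobius a b c d z‖ := himg.1
    have h2 : 1 < Complex.normSq (mobius a b c d z) := by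
      rw [← Complex.sq_norm]; nlinarith
    rw [mobius, Complex.normSq_div] at h2
    have hu : 0 < Complex.normSq (c*z+d) := Complex.normSq_pos.2 hcz
    have := (one_lt_div hu).1 h2
    simpa [hF] using sub_pos.2 this
  have hFle : ∀ z : ℂ, ‖z‖ = 1 → c*z+d ≠ 0 → F z ≤ 0 := by
    intro z hz hcz
    by_contra hpos
    push_neg at hpos
    have hu : 0 < Complex.normSq (c*z+d) := Complex.normSq_pos.2 hcz
    have h2 : 1 < Complex.normSq (mobius a b c d z) := by
      rw [mobius, Complex.normSq_div]
      rw [lt_div_iff₀ hu]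
      simp only [hF] at hpos; linarith
    have h1 : 1 < ‖mobius a b c d z‖ := by
      rw [← Complex.sq_norm] at h2; nlinarith [norm_nonneg (mobius a b c d z)]
    have hne : mobius a b c d z ≠ a / c := by
      rcases eq_or_ne c 0 with hc | hc
      · subst hc
        intro h
        rw [_root_.div_zero] at h
        rw [h] at h1
        simp only [norm_zero] at h1
        linarith
      · intro h
        simp only [mobius] at h
        rw [div_eq_div_iff hcz hc] at h
        exact hdet (by linear_combination -h)
    obtain ⟨w, hw, hww⟩ := hbij.surjOn ⟨h1, hne⟩
    have hzw : z = w := mobius_inj a b c d hdet hcz hw.2 hww.symm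
    have : (1:ℝ) < ‖z‖ := hzw ▸ (hw.1 : 1 < ‖w‖)
    rw [hz] at this
    exact lt_irrefl 1 this
  have hFge : ∀ z : ℂ, ‖z‖ = 1 → c*z+d ≠ 0 → 0 ≤ F z := by
    intro z hz hcz
    set rn : ℕ → ℝ := fun n => 1 + 1/(n+1) with hrn
    set seq : ℕ → ℂ := fun n => ((rn n : ℝ) : ℂ) * z with hseq
    have htr : Tendsto rn atTop (𝓝 1) := by
      have := (tendsto_one_div_add_atTop_nhds_zero_nat (𝕜 := ℝ)).const_add 1
      simpa [hrn] using this
    have htc : Tendsto (fun n => ((rn n : ℝ) : ℂ)) atTop (𝓝 (1:ℂ)) := by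
      have := (Complex.continuous_ofReal.tendsto 1).comp htr
      exact this
    have htend : Tendsto seq atTop (𝓝 z) := by
      have := htc.mul_const z
      simpa [hseq] using this
    have hca : Continuous (fun w : ℂ => a*w+b) := by
      exact (continuous_const.mul continuous_id).add continuous_const
    have hcc : Continuous (fun w : ℂ => c*w+d) := by
      exact (continuous_const.mul continuous_id).add continuous_const
    have hcont : Continuous F :=
      (Complex.continuous_normSq.comp hca).sub (Complex.continuous_normSq.comp hcc)
    have hev : ∀ᶠ n in atTop, 0 ≤ F (seq n) := by
      have hopen : IsOpen {w : ℂ | c*w+d ≠ 0} :=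
        (isClosed_eq hcc continuous_const).isOpen_compl
      have hmem : {w : ℂ | c*w+d ≠ 0} ∈ 𝓝 z := hopen.mem_nhds hcz
      filter_upwards [htend.eventually_mem hmem] with n hn
      have hrpos : (0:ℝ) < 1/(n+1) := by positivity
      have habs : 1 < ‖seq n‖ := by
        simp only [hseq, norm_mul, Complex.norm_real, Real.norm_eq_abs, hz, mul_one, hrn]
        rw [abs_of_pos (by positivity)]
        linarith
      exact le_of_lt (hFpos _ habs hn)
    exact ge_of_tendsto (hcont.continuousAt.tendsto.comp htend) hev
  have hF0 : ∀ z : ℂ, ‖z‖ = 1 → c*z+d ≠ 0 → F z = 0 := fun z h1 h2 =>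
    le_antisymm (hFle z h1 h2) (hFge z h1 h2)
  set na := Complex.normSq a
  set nb := Complex.normSq b
  set nc := Complex.normSq c
  set nd := Complex.normSq d
  set W : ℂ := a * (starRingEnd ℂ) b - c * (starRingEnd ℂ) d with hWdef
  set α : ℝ := na + nb - nc - nd with hαdef
  have hFcirc : ∀ z : ℂ, ‖z‖ = 1 → c*z+d ≠ 0 → α + 2*(W*z).re = 0 := by
    intro z hz hcz
    have hz1 : Complex.normSq z = 1 := by rw [← Complex.sq_norm, hz]; norm_num
    have h0 := hF0 z hz hcz
    have hre : (W*z).re = (a*z*(starRingEnd ℂ) b).re - (c*z*(starRingEnd ℂ) d).re := by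
      rw [show W*z = a*z*(starRingEnd ℂ) b - c*z*(starRingEnd ℂ) d by rw [hWdef]; ring,
        Complex.sub_re]
    simp only [hF, Complex.normSq_add, Complex.normSq_mul, hz1, mul_one] at h0
    rw [hαdef, hre]
    linarith
  -- evaluate at 1, -1, I, -I
  have habs1 : ‖(1:ℂ)‖ = 1 := by simp
  have habsm1 : ‖(-1:ℂ)‖ = 1 := by simp
  have habsI : ‖Complex.I‖ = 1 := Complex.norm_I
  have habsmI : ‖-Complex.I‖ = 1 := by simp
  have hreW1 : (W*1).re = W.re := by simp
  have hreWm1 : (W*(-1)).re = -W.re := by simp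
  have hreWI : (W*Complex.I).re = -W.im := by simp
  have hreWmI : (W*(-Complex.I)).re = W.im := by simp
  have hIpair : c*Complex.I+d ≠ 0 → c*(-Complex.I)+d ≠ 0 → α = 0 := by
    intro h1 h2
    have e1 := hFcirc _ habsI h1
    have e2 := hFcirc _ habsmI h2
    rw [hreWI] at e1; rw [hreWmI] at e2; linarith
  have hα : α = 0 := by
    by_cases h1 : c*1+d = 0
    · refine hIpair ?_ ?_
      · intro h; have := hP _ _ h h1; norm_num [Complex.ext_iff] at this
      · intro h; have := hP _ _ h h1; norm_num [Complex.ext_iff] at this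
    · by_cases h2 : c*(-1)+d = 0
      · refine hIpair ?_ ?_
        · intro h; have := hP _ _ h h2; norm_num [Complex.ext_iff] at this
        · intro h; have := hP _ _ h h2; norm_num [Complex.ext_iff] at this
      · have e1 := hFcirc _ habs1 h1
        have e2 := hFcirc _ habsm1 h2
        rw [hreW1] at e1; rw [hreWm1] at e2; linarith
  have hWre : W.re = 0 := by
    by_cases h1 : c*1+d = 0
    · have h2 : c*(-1)+d ≠ 0 := by
        intro h; have := hP _ _ h h1; norm_num [Complex.ext_iff] at this
      have e2 := hFcirc _ habsm1 h2
      rw [hreWm1] at e2; linarith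
    · have e1 := hFcirc _ habs1 h1
      rw [hreW1] at e1; linarith
  have hWim : W.im = 0 := by
    by_cases h1 : c*Complex.I+d = 0
    · have h2 : c*(-Complex.I)+d ≠ 0 := by
        intro h; have := hP _ _ h h1; norm_num [Complex.ext_iff] at this
      have e2 := hFcirc _ habsmI h2
      rw [hreWmI] at e2; linarith
    · have e1 := hFcirc _ habsI h1
      rw [hreWI] at e1; linarith
  have hW : W = 0 := Complex.ext (by simpa using hWre) (by simpa using hWim)
  have hw' : a * (starRingEnd ℂ) b = c * (starRingEnd ℂ) d := by
    have := sub_eq_zero.1 hW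
    exact this
  have hw'2 : (starRingEnd ℂ) a * b = (starRingEnd ℂ) c * d := by
    have := congrArg (starRingEnd ℂ) hw'
    simpa [mul_comm] using this
  have hαC : a*(starRingEnd ℂ) a + b*(starRingEnd ℂ) b - c*(starRingEnd ℂ) c
      - d*(starRingEnd ℂ) d = 0 := by
    rw [Complex.mul_conj, Complex.mul_conj, Complex.mul_conj, Complex.mul_conj]
    exact_mod_cast hα
  have hmain : ∀ z : ℂ, F z = (na - nc) * (Complex.normSq z - 1) := by
    intro z
    have hmc : (a*z+b)*(starRingEnd ℂ) (a*z+b) - (c*z+d)*(starRingEnd ℂ) (c*z+d)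
        = (a*(starRingEnd ℂ) a - c*(starRingEnd ℂ) c)*(z*(starRingEnd ℂ) z - 1) := by
      simp only [map_add, map_mul]
      linear_combination z * hw' + (starRingEnd ℂ) z * hw'2 + hαC
    simp only [Complex.mul_conj] at hmc
    have : ((Complex.normSq (a*z+b) - Complex.normSq (c*z+d) : ℝ) : ℂ)
        = (((na - nc) * (Complex.normSq z - 1) : ℝ) : ℂ) := by
      push_cast
      linear_combination hmc
    exact_mod_cast this
  have hs1pos : 0 < na - nc := by
    obtain ⟨z0, hz0a, hz0p⟩ : ∃ z0 : ℂ, 1 < ‖z0‖ ∧ c*z0+d ≠ 0 := by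
      by_cases h2 : c*2+d = 0
      · refine ⟨3, by norm_num, ?_⟩
        intro h; have := hP _ _ h h2; norm_num at this
      · exact ⟨2, by norm_num, h2⟩
    have hpos := hFpos z0 hz0a hz0p
    rw [hmain z0] at hpos
    have hq := Complex.sq_norm z0
    have h2 : 0 < Complex.normSq z0 - 1 := by nlinarith
    by_contra hle
    push_neg at hle
    nlinarith
  have hdet2 : (a*d-b*c) * (starRingEnd ℂ) (a*d-b*c)
      = (a*(starRingEnd ℂ) a - c*(starRingEnd ℂ) c)
        * (d*(starRingEnd ℂ) d - b*(starRingEnd ℂ) b) := by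
    simp only [map_sub, map_mul]
    linear_combination (b * (starRingEnd ℂ) a - d * (starRingEnd ℂ) c) * hw'
  have hdet3 : Complex.normSq (a*d-b*c) = (na - nc) * (nd - nb) := by
    simp only [Complex.mul_conj] at hdet2
    exact_mod_cast hdet2
  have habsdet : ‖a*d-b*c‖ = na - nc := by
    have h1 : (‖a*d-b*c‖)^2 = (na - nc)^2 := by
      rw [Complex.sq_norm, hdet3]; nlinarith [hα]
    have h2 : 0 ≤ ‖a*d-b*c‖ := norm_nonneg _
    exact le_antisymm (by nlinarith) (by nlinarith)
  intro z
  rw [show (Complex.normSq (a*z+b) - Complex.normSq (c*z+d)) = F z from rfl,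
    hmain z, habsdet]

lemma mobius_deriv (a b c d z : ℂ) (h : c*z+d ≠ 0) :
    deriv (mobius a b c d) z = (a*d-b*c)/(c*z+d)^2 := by
  have h1 : HasDerivAt (fun z : ℂ => a*z+b) a z := by
    simpa using ((hasDerivAt_id z).const_mul a).add_const b
  have h2 : HasDerivAt (fun z : ℂ => c*z+d) c z := by
    simpa using ((hasDerivAt_id z).const_mul c).add_const d
  have h3 := (h1.div h2 h).deriv
  rw [show mobius a b c d = (fun z : ℂ => a*z+b) / (fun z => c*z+d) from rfl, h3]
  ring

/-- If `φ ∈ B_♯^X(𝔻*)` is invariant under a Möbius automorphism `g` of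
`𝔻*` whose iterates converge on all of `𝔻*` to a point `ξ ∈ 𝕊 \ X`, then `φ ≡ 0`. -/
theorem invariant_vanish_eq_zero (X : Set ℂ) (hX : X ⊆ unitCircle) (a b c d : ℂ)
    (hdet : a * d - b * c ≠ 0)
    (hbij : Set.BijOn (mobius a b c d) (extDisk \ {z : ℂ | c * z + d = 0})
      (extDisk \ {a / c}))
    (φ : ℂ → ℂ) (hφ : MemB φ) (hvan : BVanishRel X φ)
    (hinv : ∀ z ∈ extDisk, c * z + d ≠ 0 →
      φ (mobius a b c d z) * (deriv (mobius a b c d) z) ^ 2 = φ z)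
    (ξ : ℂ) (hξ : ξ ∈ unitCircle) (hξX : ξ ∉ X)
    (horb : ∀ w ∈ extDisk, Tendsto (fun n => (mobius a b c d)^[n] w) atTop (𝓝 ξ)) :
    ∀ z ∈ extDisk, φ z = 0  := by
  set g := mobius a b c d with hg
  have hkey := key_identity a b c d hdet hbij
  have hP : ∀ x y : ℂ, c*x+d = 0 → c*y+d = 0 → x = y := by
    intro x y hx hy
    rcases eq_or_ne c 0 with hc | hc
    · exfalso; apply hdet
      subst hc
      simp only [zero_mul, zero_add] at hx
      rw [hx]; ring
    · have h : c * x = c * y := by linear_combination hx - hy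
      exact mul_left_cancel₀ hc h
  have hdetabs : 0 < ‖a*d-b*c‖ := by
    simpa using hdet
  have hext_open : IsOpen extDisk := isOpen_lt continuous_const continuous_norm
  have hbw : ∀ w : ℂ, bweight w = (Complex.normSq w - 1)^2 := by
    intro w
    rw [bweight, Complex.sq_norm]
  -- one-step invariance
  have hstep : ∀ z : ℂ, z ∈ extDisk → c*z+d ≠ 0 →
      g z ∈ extDisk ∧
        bweight (g z) * ‖φ (g z)‖ = bweight z * ‖φ z‖ := by
    intro z hz hcz
    have hmem : z ∈ extDisk \ {w : ℂ | c*w+d = 0} := ⟨hz, hcz⟩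
    have himg := hbij.mapsTo hmem
    refine ⟨himg.1, ?_⟩
    set u := Complex.normSq (c*z+d) with hu
    have hupos : 0 < u := Complex.normSq_pos.2 hcz
    set A := ‖a*d-b*c‖ with hA
    have hng : Complex.normSq (g z) = Complex.normSq (a*z+b)/u := by
      rw [hg]
      simp only [mobius, Complex.normSq_div, hu]
    have hgz1 : Complex.normSq (g z) - 1 = A * (Complex.normSq z - 1) / u := by
      rw [hng]
      field_simp
      linear_combination hkey z
    have hder : deriv g z = (a*d-b*c)/(c*z+d)^2 := by
      rw [hg]; exact mobius_deriv a b c d z hcz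
    have habsder : ‖deriv g z‖ = A / u := by
      rw [hder, norm_div, norm_pow, Complex.sq_norm, hA, hu]
    have hinv' := hinv z hz hcz
    have habsinv : ‖φ (g z)‖ * (A/u)^2 = ‖φ z‖ := by
      have h := congrArg (‖·‖) hinv'
      rw [norm_mul, norm_pow, habsder] at h
      exact h
    rw [hbw, hbw, hgz1, ← habsinv]
    field_simp
  -- iterated invariance
  have hiter : ∀ n : ℕ, ∀ z : ℂ, z ∈ extDisk → (∀ k, k < n → c * (g^[k] z) + d ≠ 0) →
      g^[n] z ∈ extDisk ∧
        bweight (g^[n] z) * ‖φ (g^[n] z)‖ = bweight z * ‖φ z‖ := by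
    intro n
    induction n with
    | zero => intro z hz _; exact ⟨hz, rfl⟩
    | succ n ih =>
      intro z hz hk
      obtain ⟨h1, h2⟩ := ih z hz (fun k hkn => hk k (Nat.lt_succ_of_lt hkn))
      have h3 := hstep _ h1 (hk n (Nat.lt_succ_self n))
      rw [Function.iterate_succ_apply']
      exact ⟨h3.1, by rw [h3.2, h2]⟩
  have hbwpos : ∀ z ∈ extDisk, 0 < bweight z := by
    intro z hz
    have h1 : 1 < ‖z‖ := hz
    rw [bweight]
    have h2 : 0 < ‖z‖ ^ 2 - 1 := by nlinarith
    exact pow_pos h2 2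
  have hzero : ∀ z ∈ extDisk, bweight z * ‖φ z‖ = 0 → φ z = 0 := by
    intro z hz h0
    rcases mul_eq_zero.1 h0 with h | h
    · exact absurd h (ne_of_gt (hbwpos z hz))
    · simpa using h
  -- points with clean orbits
  have hclean : ∀ z ∈ extDisk, (∀ k : ℕ, c * (g^[k] z) + d ≠ 0) → φ z = 0 := by
    intro z hz hk
    apply hzero z hz
    have key : ∀ ε : ℝ, 0 < ε → bweight z * ‖φ z‖ < ε := by
      intro ε hε
      obtain ⟨K, hKc, hKsub, hKb⟩ := hvan ε hε
      have hξK : ξ ∉ K := by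
        intro h
        rcases hKsub h with h' | h'
        · have h1 : 1 < ‖ξ‖ := h'
          have h2 : ‖ξ‖ = 1 := hξ
          rw [h2] at h1
          exact lt_irrefl 1 h1
        · exact hξX h'
      have hK : Kᶜ ∈ 𝓝 ξ := hKc.isClosed.isOpen_compl.mem_nhds hξK
      obtain ⟨n, hn⟩ := ((horb z hz).eventually_mem hK).exists
      obtain ⟨hmem, heq⟩ := hiter n z hz (fun k _ => hk k)
      rw [← heq]
      exact hKb (g^[n] z) ⟨hmem, hn⟩
    have hnn : 0 ≤ bweight z * ‖φ z‖ :=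
      mul_nonneg (le_of_lt (hbwpos z hz)) (norm_nonneg _)
    rcases lt_or_eq_of_le hnn with h | h
    · exact absurd (key _ h) (lt_irrefl _)
    · exact h.symm
  -- the exceptional set is countable
  set S : Set ℂ := {z : ℂ | ∃ k : ℕ, c * (g^[k] z) + d = 0} with hS
  have hsub : ∀ k : ℕ,
      {z : ℂ | c * (g^[k] z) + d = 0 ∧ ∀ j, j < k → c * (g^[j] z) + d ≠ 0}.Subsingleton := by
    intro k
    induction k with
    | zero => intro x hx y hy; exact hP x y hx.1 hy.1
    | succ k ih =>
      intro x hx y hy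
      have hx' : g x ∈ {z : ℂ | c * (g^[k] z) + d = 0 ∧ ∀ j, j < k → c * (g^[j] z) + d ≠ 0} := by
        constructor
        · rw [← Function.iterate_succ_apply]; exact hx.1
        · intro j hj
          rw [← Function.iterate_succ_apply]
          exact hx.2 (j+1) (Nat.succ_lt_succ hj)
      have hy' : g y ∈ {z : ℂ | c * (g^[k] z) + d = 0 ∧ ∀ j, j < k → c * (g^[j] z) + d ≠ 0} := by
        constructor
        · rw [← Function.iterate_succ_apply]; exact hy.1
        · intro j hj
          rw [← Function.iterate_succ_apply]
          exact hy.2 (j+1) (Nat.succ_lt_succ hj)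
      have hgxy : g x = g y := ih hx' hy'
      have hx0 : c * x + d ≠ 0 := by simpa using hx.2 0 (Nat.succ_pos k)
      have hy0 : c * y + d ≠ 0 := by simpa using hy.2 0 (Nat.succ_pos k)
      exact mobius_inj a b c d hdet hx0 hy0 hgxy
  have hScount : S.Countable := by
    have hSsub : S ⊆ ⋃ k : ℕ,
        {z : ℂ | c * (g^[k] z) + d = 0 ∧ ∀ j, j < k → c * (g^[j] z) + d ≠ 0} := by
      intro z hz
      have hex : ∃ k, c * (g^[k] z) + d = 0 := hz
      exact Set.mem_iUnion.2 ⟨Nat.find hex, Nat.find_spec hex,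
        fun j hj => Nat.find_min hex hj⟩
    exact (Set.countable_iUnion (fun k => (hsub k).countable)).mono hSsub
  -- φ vanishes at the poles inside extDisk
  have hpole : ∀ q ∈ extDisk, c*q+d = 0 → φ q = 0 := by
    intro q hq hcq
    have hdense : Dense Sᶜ := hScount.dense_compl ℂ
    have hql : q ∈ closure (extDisk ∩ Sᶜ) := by
      rw [mem_closure_iff]
      intro O hO hqO
      obtain ⟨x, hx⟩ := hdense.inter_open_nonempty _ (hO.inter hext_open) ⟨q, hqO, hq⟩
      exact ⟨x, hx.1.1, hx.1.2, hx.2⟩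
    have hco : ContinuousAt φ q := by
      have hmem : extDisk ∈ 𝓝 q := hext_open.mem_nhds hq
      exact (hφ.1.differentiableAt hmem).continuousAt
    have hne : (𝓝[extDisk ∩ Sᶜ] q).NeBot := mem_closure_iff_nhdsWithin_neBot.1 hql
    have h1 : Tendsto φ (𝓝[extDisk ∩ Sᶜ] q) (𝓝 (φ q)) := hco.continuousWithinAt
    have h2 : Tendsto φ (𝓝[extDisk ∩ Sᶜ] q) (𝓝 0) := by
      apply Tendsto.congr' _ tendsto_const_nhds
      filter_upwards [self_mem_nhdsWithin] with x hx
      exact (hclean x hx.1 (fun k hcon => hx.2 ⟨k, hcon⟩)).symm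
    exact tendsto_nhds_unique h1 h2
  -- conclusion
  intro z hz
  by_cases hzS : z ∈ S
  · have hex : ∃ k, c * (g^[k] z) + d = 0 := hzS
    have hkm : ∀ j, j < Nat.find hex → c * (g^[j] z) + d ≠ 0 :=
      fun j hj => Nat.find_min hex hj
    obtain ⟨hmem, heq⟩ := hiter (Nat.find hex) z hz hkm
    have hq0 : φ (g^[Nat.find hex] z) = 0 := hpole _ hmem (Nat.find_spec hex)
    apply hzero z hz
    rw [← heq, hq0]
    simp
  · exact hclean z hz (fun k hcon => hzS ⟨k, hcon⟩)
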